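/- Let n ≥ 1 and let u, v, u', v' ∈ S_n ⊂ S_{n+1}. Then u·s_n·v = u'·s_n·v' in S_{n+1} if and only if there exists w ∈ S_{n+1} fixing both n and n+1 (i.e. w ∈ S_{n−1}) such that u' = u·w and v' = w^{-1}·v. (This equality of fibers underlies the bimodule isomorphism ℚ[S_n] ⊗_{ℚ[S_{n−1}]} ℚ[S_n] ≅ ℚ[S_n]·s_n·ℚ[S_n] given by a ⊗ b ↦ a s_n b.) -/

import Mathlib

/-- The transposition `s_n = (n, n+1)` in `S_{n+1}` (0-based: swapping `n-1` and `n`). -/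
def sN (n : ℕ) : Equiv.Perm (Fin (n + 1)) :=
  Equiv.swap ⟨n - 1, by omega⟩ (Fin.last n)

/-- For `n ≥ 1` and `u, v, u', v' ∈ S_n ⊂ S_{n+1}`: `u·s_n·v = u'·s_n·v'` iff there is a
`w ∈ S_{n+1}` fixing both `n` and `n+1` (i.e. `w ∈ S_{n-1}`) with `u' = u·w` and
`v' = w⁻¹·v`. -/
theorem sandwich_fibers (n : ℕ) (hn : 1 ≤ n) (u v u' v' : Equiv.Perm (Fin (n + 1)))
    (hu : u (Fin.last n) = Fin.last n) (hv : v (Fin.last n) = Fin.last n)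
    (hu' : u' (Fin.last n) = Fin.last n) (hv' : v' (Fin.last n) = Fin.last n) :
    u * sN n * v = u' * sN n * v' ↔
      ∃ w : Equiv.Perm (Fin (n + 1)),
        w ⟨n - 1, by omega⟩ = (⟨n - 1, by omega⟩ : Fin (n + 1)) ∧
        w (Fin.last n) = Fin.last n ∧ u' = u * w ∧ v' = w⁻¹ * v := by
  set a : Fin (n + 1) := ⟨n - 1, by omega⟩ with ha
  have hss : sN n * sN n = 1 := by simp [sN, Equiv.swap_mul_self]
  constructor
  · intro h
    set w : Equiv.Perm (Fin (n + 1)) := u⁻¹ * u' with hwdef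
    have hw : w = sN n * (v * v'⁻¹) * (sN n)⁻¹ := by
      calc w = u⁻¹ * (u' * sN n * v') * v'⁻¹ * (sN n)⁻¹ := by rw [hwdef]; group
        _ = u⁻¹ * (u * sN n * v) * v'⁻¹ * (sN n)⁻¹ := by rw [h]
        _ = sN n * (v * v'⁻¹) * (sN n)⁻¹ := by group
    have hsinv : (sN n)⁻¹ = sN n := by simp [sN, Equiv.swap_inv]
    have hv'i : v'⁻¹ (Fin.last n) = Fin.last n :=
      (Equiv.Perm.inv_eq_iff_eq).mpr hv'.symm
    have hsl : (sN n) (Fin.last n) = a := by simp [sN, Equiv.swap_apply_right, ha]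
    have hsa : (sN n) a = Fin.last n := by simp [sN, Equiv.swap_apply_left, ha]
    have hwa : w a = a := by
      rw [hw, hsinv]
      simp only [Equiv.Perm.mul_apply]
      rw [hsa, hv'i, hv, hsl]
    have hwl : w (Fin.last n) = Fin.last n := by
      rw [hwdef]
      simp only [Equiv.Perm.mul_apply]
      rw [hu']
      exact (Equiv.Perm.inv_eq_iff_eq).mpr hu.symm
    have hconj : w * sN n * w⁻¹ = sN n := by
      rw [sN, ← Equiv.swap_apply_apply, hwa, hwl]
    have hws : w * sN n = sN n * w := by
      calc w * sN n = (w * sN n * w⁻¹) * w := by group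
        _ = sN n * w := by rw [hconj]
    have hvv' : v * v'⁻¹ = w := by
      calc v * v'⁻¹ = sN n * (sN n * (v * v'⁻¹) * sN n) * sN n := by
            calc v * v'⁻¹ = (sN n * sN n) * (v * v'⁻¹) * (sN n * sN n) := by
                  rw [hss]; group
              _ = sN n * (sN n * (v * v'⁻¹) * sN n) * sN n := by group
        _ = sN n * (sN n * (v * v'⁻¹) * (sN n)⁻¹) * sN n := by rw [hsinv]
        _ = sN n * w * sN n := by rw [← hw]
        _ = w * sN n * sN n := by rw [← hws]
        _ = w := by rw [mul_assoc, hss, mul_one]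
    refine ⟨w, hwa, hwl, by rw [hwdef]; group, ?_⟩
    rw [← hvv']
    group
  · rintro ⟨w, hwa, hwl, rfl, rfl⟩
    have hconj : w * sN n * w⁻¹ = sN n := by
      rw [sN, ← Equiv.swap_apply_apply, hwa, hwl]
    calc u * sN n * v = u * (w * sN n * w⁻¹) * v := by rw [hconj]
      _ = u * w * sN n * (w⁻¹ * v) := by group
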